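/- Correctness of the clique-detection test: let cl be a finite family of finite sets of variables and sh a finite set of nonempty finite sets of variables such that the pair (cl, sh) is minimal, i.e., ↓cl ∩ sh = ∅. Then for every finite set S of variables: every nonempty subset of S belongs to ↓cl ∪ sh if and only if |{u ∈ sh : u ⊆ S}| = 2^{|S|} − 1 − [S], where [S] is the number of nonempty subsets of S contained in at least one member of cl. -/
import Mathlib


variable {V : Type*} [DecidableEq V]

/-- `℘⁰(C)`: the set of nonempty subsets of a finite set `C`. -/
def pow0 (C : Finset V) : Set (Finset V) := {u | u ⊆ C ∧ u ≠ ∅}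

/-- Concretization of a clique set: `↓cl = ⋃_{C ∈ cl} ℘⁰(C)`. -/
def conc (cl : Set (Finset V)) : Set (Finset V) := ⋃ C ∈ cl, pow0 C

/-- Binary union: `s₁ ⊎ s₂ = {a ∪ b : a ∈ s₁, b ∈ s₂}`. -/
def bin (s₁ s₂ : Set (Finset V)) : Set (Finset V) :=
  {u | ∃ a ∈ s₁, ∃ b ∈ s₂, u = a ∪ b}

/-- Star union: all unions `⋃ T` over finite nonempty subfamilies `T ⊆ s`. -/
def starU (s : Set (Finset V)) : Set (Finset V) :=
  {u | ∃ T : Finset (Finset V), T.Nonempty ∧ ↑T ⊆ s ∧ u = T.sup id}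

/-- `s_G`: the part of `s` relevant to `G` (groups intersecting `G`). -/
def relG (G : Finset V) (s : Set (Finset V)) : Set (Finset V) :=
  {u ∈ s | u ∩ G ≠ ∅}

/-- `rel̄(S, cl) = {C \ S : C ∈ cl} \ {∅}`. -/
def relbar (S : Finset V) (cl : Set (Finset V)) : Set (Finset V) :=
  {d | (∃ C ∈ cl, d = C \ S) ∧ d ≠ ∅}

/-- `project(G, s) = {u ∩ G : u ∈ s} \ {∅}`. -/
def sproject (G : Finset V) (s : Set (Finset V)) : Set (Finset V) :=
  {d | (∃ u ∈ s, d = u ∩ G) ∧ d ≠ ∅}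

/-- Abstract unification of the Sharing domain for `x = t`, `T` the variables of `t`. -/
def amgu (x : V) (T : Finset V) (s : Set (Finset V)) : Set (Finset V) :=
  (s \ relG ({x} ∪ T) s) ∪ bin (starU (relG {x} s)) (starU (relG T s))

/-- The `extend` function of the Sharing domain. -/
def extendSh (Call : Set (Finset V)) (G : Finset V) (Prime : Set (Finset V)) :
    Set (Finset V) :=
  {u ∈ Call | u ∩ G = ∅} ∪ {u ∈ starU (relG G Call) | u ∩ G ∈ Prime}

/-- Union of all groups of `s` containing `x`, as a set of variables. -/
def occSet (s : Set (Finset V)) (x : V) : Set V :=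
  ⋃ u ∈ {u ∈ s | x ∈ u}, (↑u : Set V)

open Finset in
/-- Correctness of the clique-detection test. -/
theorem clique_detection_test (cl : Finset (Finset V)) (sh : Finset (Finset V))
    (hsh : ∀ u ∈ sh, u ≠ ∅)
    (hmin : conc (↑cl : Set (Finset V)) ∩ (↑sh : Set (Finset V)) = ∅) :
    ∀ S : Finset V,
      ((∀ u : Finset V, u ⊆ S → u ≠ ∅ →
          u ∈ conc (↑cl : Set (Finset V)) ∪ (↑sh : Set (Finset V))) ↔
        ((sh.filter (fun u => u ⊆ S)).card : ℤ) =
          2 ^ S.card - 1 -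
            (S.powerset.filter (fun u => u ≠ ∅ ∧ ∃ C ∈ cl, u ⊆ C)).card) := by
  intro S
  classical
  set P := S.powerset.filter (fun u => u ≠ ∅) with hPdef
  set A := S.powerset.filter (fun u => u ≠ ∅ ∧ ∃ C ∈ cl, u ⊆ C) with hAdef
  set B := sh.filter (fun u => u ⊆ S) with hBdef
  have hconc : ∀ u : Finset V, u ∈ conc (↑cl : Set (Finset V)) ↔
      (u ≠ ∅ ∧ ∃ C ∈ cl, u ⊆ C) := by
    intro u
    simp only [conc, pow0, Set.mem_iUnion, Set.mem_setOf_eq, Finset.mem_coe]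
    tauto
  have hdisj : ∀ u : Finset V, u ∈ conc (↑cl : Set (Finset V)) → u ∉ sh := by
    intro u hu husm
    have : u ∈ conc (↑cl : Set (Finset V)) ∩ (↑sh : Set (Finset V)) := ⟨hu, husm⟩
    rw [hmin] at this
    exact this
  have hAP : A ⊆ P := by
    intro u hu
    simp only [hAdef, hPdef, Finset.mem_filter] at *
    tauto
  have hAmem : ∀ u, u ∈ A ↔ (u ⊆ S ∧ u ∈ conc (↑cl : Set (Finset V))) := by
    intro u
    simp only [hAdef, Finset.mem_filter, Finset.mem_powerset, hconc]
  have hBsub : B ⊆ P \ A := by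
    intro u hu
    simp only [hBdef, Finset.mem_filter] at hu
    simp only [Finset.mem_sdiff, hPdef, Finset.mem_filter, Finset.mem_powerset, hAmem]
    exact ⟨⟨hu.2, hsh u hu.1⟩, fun h => hdisj u h.2 hu.1⟩
  have hPcard : P.card = 2 ^ S.card - 1 := by
    have : P = S.powerset.erase ∅ := by
      ext u
      simp [hPdef, Finset.mem_erase, and_comm]
    rw [this, Finset.card_erase_of_mem (by simp), Finset.card_powerset]
  have hPA : (P \ A).card = 2 ^ S.card - 1 - A.card := by
    rw [Finset.card_sdiff_of_subset hAP, hPcard]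
  have hApos : A.card ≤ 2 ^ S.card - 1 := hPcard ▸ Finset.card_le_card hAP
  have h1le : 1 ≤ 2 ^ S.card := Nat.one_le_two_pow
  constructor
  · intro h
    have hBeq : B = P \ A := by
      apply Finset.Subset.antisymm hBsub
      intro u hu
      simp only [Finset.mem_sdiff, hPdef, Finset.mem_filter, Finset.mem_powerset] at hu
      obtain ⟨⟨huS, hune⟩, huA⟩ := hu
      rcases h u huS hune with hc | hs
      · exact absurd ((hAmem u).2 ⟨huS, hc⟩) huA
      · simp only [hBdef, Finset.mem_filter]
        exact ⟨hs, huS⟩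
    have : B.card = 2 ^ S.card - 1 - A.card := by rw [hBeq, hPA]
    have := this
    zify [hApos, h1le] at this
    linarith [this]
  · intro h
    have hcardB : B.card = (P \ A).card := by
      rw [hPA]
      have h2 : (B.card : ℤ) = (2 ^ S.card - 1 - A.card : ℕ) := by
        push_cast [hApos, h1le]
        push_cast at h
        linarith
      exact_mod_cast h2
    have hBeq : B = P \ A := Finset.eq_of_subset_of_card_le hBsub (le_of_eq hcardB.symm)
    intro u huS hune
    by_cases hA : u ∈ A
    · exact Or.inl ((hAmem u).1 hA).2
    · have : u ∈ P \ A := by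
        simp only [Finset.mem_sdiff, hPdef, Finset.mem_filter, Finset.mem_powerset]
        exact ⟨⟨huS, hune⟩, hA⟩
      rw [← hBeq] at this
      simp only [hBdef, Finset.mem_filter] at this
      exact Or.inr this.1
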